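/- Let θ ∈ ℝ, let S : [0,∞) → Matrix d d ℂ be differentiable with S(t) Hermitian and positive definite for every t, and let Ψ : [0,∞) → Matrix d d ℂ be continuous with Ψ(t) Hermitian and (S²)'(t) = θ · S(t) · Ψ(t) · S(t) for all t. If Q : [0,∞) → Matrix d d ℂ is differentiable with Q(0) = S(0)² and Q'(t) = (θ/2)·( S(t)·Ψ(t)·S(t)⁻¹·Q(t) + Q(t)·S(t)⁻¹·Ψ(t)·S(t) ) for all t, then Q(t) = S(t)² for every t ≥ 0. (Uniqueness step in the proof of Theorem 3: the propagated Gram operator coincides with the squared exponential factor.) -/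

import Mathlib

open Matrix Set
open scoped ComplexOrder

attribute [local instance] Matrix.normedAddCommGroup Matrix.normedSpace

private lemma matrix_norm_mul_le {d : ℕ} (C x : Matrix (Fin d) (Fin d) ℂ) :
    ‖C * x‖ ≤ d * ‖C‖ * ‖x‖ := by
  rw [Matrix.norm_le_iff (by positivity)]
  intro i j
  calc ‖(C * x) i j‖ = ‖∑ k, C i k * x k j‖ := by rfl
    _ ≤ ∑ k : Fin d, ‖C i k * x k j‖ := norm_sum_le _ _
    _ ≤ ∑ k : Fin d, ‖C‖ * ‖x‖ := by
        refine Finset.sum_le_sum fun k _ => ?_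
        rw [norm_mul]
        exact mul_le_mul (norm_entry_le_entrywise_sup_norm C)
          (norm_entry_le_entrywise_sup_norm x) (norm_nonneg _) (norm_nonneg _)
    _ = d * ‖C‖ * ‖x‖ := by simp [mul_assoc]

/-- uniqueness step in Theorem 3: if `(S²)' = θ·S·Ψ·S` on `[0,∞)` and `Q`
solves `Q' = (θ/2)(SΨS⁻¹Q + QS⁻¹ΨS)` with `Q(0) = S(0)²`, then `Q = S²` on `[0,∞)`. -/
theorem propagated_gram_eq_squared_exponential {d : ℕ}
    (θ : ℝ)
    (S Ψ Q : ℝ → Matrix (Fin d) (Fin d) ℂ)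
    (hSdiff : ∀ t ∈ Ici (0 : ℝ), DifferentiableWithinAt ℝ S (Ici (0 : ℝ)) t)
    (hSpos : ∀ t ∈ Ici (0 : ℝ), (S t).IsHermitian ∧ (S t).PosDef)
    (hΨcont : ContinuousOn Ψ (Ici (0 : ℝ)))
    (hΨherm : ∀ t ∈ Ici (0 : ℝ), (Ψ t).IsHermitian)
    (hS2 : ∀ t ∈ Ici (0 : ℝ),
      HasDerivWithinAt (fun s => S s ^ 2) (θ • (S t * Ψ t * S t)) (Ici (0 : ℝ)) t)
    (hQ0 : Q 0 = S 0 ^ 2)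
    (hQ : ∀ t ∈ Ici (0 : ℝ),
      HasDerivWithinAt Q
        ((θ / 2) • (S t * Ψ t * (S t)⁻¹ * Q t + Q t * (S t)⁻¹ * Ψ t * S t))
        (Ici (0 : ℝ)) t) :
    ∀ t ∈ Ici (0 : ℝ), Q t = S t ^ 2 := by
  intro t ht
  rw [mem_Ici] at ht
  -- basic facts
  have hdet : ∀ u ∈ Ici (0 : ℝ), IsUnit (S u).det := fun u hu =>
    isUnit_iff_ne_zero.mpr ((hSpos u hu).2.det_pos.ne')
  have hScont : ContinuousOn S (Ici (0 : ℝ)) := fun u hu =>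
    (hSdiff u hu).continuousWithinAt
  have hSinvcont : ContinuousOn (fun u => (S u)⁻¹) (Ici (0 : ℝ)) := by
    intro u hu
    have h1 : ContinuousAt Inv.inv (S u) := by
      refine continuousAt_matrix_inv _ ?_
      rw [Ring.inverse_eq_inv']
      exact continuousAt_inv₀ ((hSpos u hu).2.det_pos.ne')
    exact h1.comp_continuousWithinAt (hScont u hu)
  -- the coefficient matrices
  set A : ℝ → Matrix (Fin d) (Fin d) ℂ := fun u => S u * Ψ u * (S u)⁻¹ with hA
  set B : ℝ → Matrix (Fin d) (Fin d) ℂ := fun u => (S u)⁻¹ * Ψ u * S u with hB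
  have hAcont : ContinuousOn A (Ici (0 : ℝ)) :=
    ((hScont.mul hΨcont).mul hSinvcont)
  have hBcont : ContinuousOn B (Ici (0 : ℝ)) :=
    ((hSinvcont.mul hΨcont).mul hScont)
  -- uniform bounds on [0, t]
  have hsub : Icc (0 : ℝ) t ⊆ Ici 0 := Icc_subset_Ici_self
  obtain ⟨MA, hMA⟩ := (isCompact_Icc).exists_bound_of_continuousOn (hAcont.mono hsub)
  obtain ⟨MB, hMB⟩ := (isCompact_Icc).exists_bound_of_continuousOn (hBcont.mono hsub)
  have hMA0 : 0 ≤ MA := le_trans (norm_nonneg _) (hMA 0 ⟨le_refl _, ht⟩)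
  have hMB0 : 0 ≤ MB := le_trans (norm_nonneg _) (hMB 0 ⟨le_refl _, ht⟩)
  -- clamping to [0, t]
  set P : ℝ → ℝ := fun u => min (max u 0) t with hP
  have hPmem : ∀ u, P u ∈ Icc (0 : ℝ) t :=
    fun u => ⟨le_min (le_max_right _ _) ht, min_le_right _ _⟩
  have hPid : ∀ u ∈ Icc (0 : ℝ) t, P u = u := fun u hu => by
    simp [hP, max_eq_left hu.1, min_eq_left hu.2]
  -- the vector field
  set v : ℝ → Matrix (Fin d) (Fin d) ℂ → Matrix (Fin d) (Fin d) ℂ :=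
    fun u x => (θ / 2) • (A (P u) * x + x * B (P u)) with hv
  set K : NNReal := Real.toNNReal (|θ / 2| * (d * MA + d * MB)) with hK
  have hlip : ∀ u, LipschitzOnWith K (v u) univ := by
    intro u
    refine (LipschitzWith.of_dist_le_mul fun x y => ?_).lipschitzOnWith
    rw [dist_eq_norm, dist_eq_norm]
    have hz : v u x - v u y = (θ / 2) • (A (P u) * (x - y) + (x - y) * B (P u)) := by
      simp only [hv]
      rw [← smul_sub]
      congr 1
      noncomm_ring
    rw [hz, norm_smul]
    have h1 : ‖A (P u) * (x - y) + (x - y) * B (P u)‖ ≤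
        (d * MA + d * MB) * ‖x - y‖ := by
      calc ‖A (P u) * (x - y) + (x - y) * B (P u)‖
          ≤ ‖A (P u) * (x - y)‖ + ‖(x - y) * B (P u)‖ := norm_add_le _ _
        _ ≤ d * ‖A (P u)‖ * ‖x - y‖ + d * ‖x - y‖ * ‖B (P u)‖ :=
            add_le_add (matrix_norm_mul_le _ _) (matrix_norm_mul_le _ _)
        _ ≤ d * MA * ‖x - y‖ + d * ‖x - y‖ * MB := by
            gcongr
            · exact hMA _ (hPmem u)
            · exact hMB _ (hPmem u)
        _ = (d * MA + d * MB) * ‖x - y‖ := by ring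
    calc ‖(θ / 2 : ℝ)‖ * ‖A (P u) * (x - y) + (x - y) * B (P u)‖
        ≤ |θ / 2| * ((d * MA + d * MB) * ‖x - y‖) := by
          rw [Real.norm_eq_abs]
          exact mul_le_mul_of_nonneg_left h1 (abs_nonneg _)
      _ = (|θ / 2| * (d * MA + d * MB)) * ‖x - y‖ := by ring
      _ ≤ (K : ℝ) * ‖x - y‖ := by
          apply mul_le_mul_of_nonneg_right _ (norm_nonneg _)
          rw [hK, Real.coe_toNNReal']
          exact le_max_left _ _
  -- both Q and S² solve x' = v u x on [0, t]
  have hmemIci : ∀ u ∈ Ico (0 : ℝ) t, u ∈ Ici (0 : ℝ) := fun u hu => hu.1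
  have hQcont : ContinuousOn Q (Icc 0 t) :=
    fun u hu => ((hQ u (hsub hu)).continuousWithinAt).mono hsub
  have hS2cont : ContinuousOn (fun s => S s ^ 2) (Icc 0 t) :=
    ((hScont.mono hsub).pow 2)
  have hQ' : ∀ u ∈ Ico (0 : ℝ) t, HasDerivWithinAt Q (v u (Q u)) (Ici u) u := by
    intro u hu
    have h0 := (hQ u (hmemIci u hu)).mono (Ici_subset_Ici.mpr hu.1)
    have heq : v u (Q u) =
        (θ / 2) • (S u * Ψ u * (S u)⁻¹ * Q u + Q u * (S u)⁻¹ * Ψ u * S u) := by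
      simp only [hv, hA, hB, hPid u ⟨hu.1, hu.2.le⟩]
      congr 1
      noncomm_ring
    rw [heq]; exact h0
  have hS2' : ∀ u ∈ Ico (0 : ℝ) t,
      HasDerivWithinAt (fun s => S s ^ 2) (v u (S u ^ 2)) (Ici u) u := by
    intro u hu
    have h0 := (hS2 u (hmemIci u hu)).mono (Ici_subset_Ici.mpr hu.1)
    have hiu : IsUnit (S u).det := hdet u (hmemIci u hu)
    have heq : v u (S u ^ 2) = θ • (S u * Ψ u * S u) := by
      simp only [hv, hA, hB, hPid u ⟨hu.1, hu.2.le⟩]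
      have e1 : S u * Ψ u * (S u)⁻¹ * S u ^ 2 = S u * Ψ u * S u := by
        have h : S u * Ψ u * (S u)⁻¹ * S u ^ 2
            = S u * Ψ u * ((S u)⁻¹ * S u) * S u := by noncomm_ring
        rw [h, Matrix.nonsing_inv_mul _ hiu, mul_one]
      have e2 : S u ^ 2 * ((S u)⁻¹ * Ψ u * S u) = S u * Ψ u * S u := by
        have h : S u ^ 2 * ((S u)⁻¹ * Ψ u * S u)
            = S u * (S u * (S u)⁻¹) * (Ψ u * S u) := by noncomm_ring
        rw [h, Matrix.mul_nonsing_inv _ hiu, mul_one, ← mul_assoc]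
      rw [e1, e2, ← two_smul ℝ (S u * Ψ u * S u), smul_smul]
      congr 1
      field_simp
    rw [heq]; exact h0
  have := ODE_solution_unique_of_mem_Icc_right (fun u _ => hlip u) hQcont hQ'
    (fun u _ => mem_univ _) hS2cont hS2' (fun u _ => mem_univ _) hQ0
  exact this ⟨ht, le_refl t⟩
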